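/- Let (E, ρ) be a complete separable metric space, μ a Borel probability measure on E, and α : [0,∞) → [0,∞) convex with α(0) = 0. Suppose μ satisfies the α-W₁H inequality: α(W₁(η, μ)) ≤ H(η | μ) for every Borel probability measure η on E, where W₁ is the L¹-Wasserstein distance for ρ and H the relative entropy. Then for every bounded Lipschitz f : E → ℝ with Lipschitz constant at most 1 and every λ > 0, ∫ e^{λ(f − μ(f))} dμ ≤ e^{α*(λ)}, where α*(λ) = sup_{r ≥ 0}(rλ − α(r)). -/

import Mathlib

open MeasureTheory
open scoped ENNReal

/-- The `L¹`-Wasserstein distance (transportation cost) between two measures, as an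
extended nonnegative real: the infimum over all couplings `π` of `∫ ρ(x,y) dπ`. -/
noncomputable def wasserstein1 {E : Type*} [MeasurableSpace E] [PseudoEMetricSpace E]
    (μ ν : Measure E) : ℝ≥0∞ :=
  ⨅ (π : Measure (E × E)) (_ : π.map Prod.fst = μ) (_ : π.map Prod.snd = ν),
    ∫⁻ p, edist p.1 p.2 ∂π

/-- Gozlan–Léonard / Bobkov–Götze characterization (one direction): if a probability
measure `μ` on a complete separable metric space satisfies the `α`-`W₁H` inequality
`α(W₁(η, μ)) ≤ H(η | μ)` for all probability measures `η` (here expressed via real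
lower bounds of `W₁` and via the log-likelihood ratio `llr`, the inequality being
vacuous when `η` is not absolutely continuous or `llr` is not integrable, i.e.
`H(η|μ) = ∞`), then for every bounded `1`-Lipschitz `f` and every `λ > 0`,
`∫ e^{λ(f - μ(f))} dμ ≤ e^{α*(λ)}` where `α*(λ) = sup_{r ≥ 0}(rλ - α(r))`. -/
theorem w1h_implies_exponential_moment_bound
    {E : Type*} [MetricSpace E] [CompleteSpace E] [TopologicalSpace.SeparableSpace E]
    [MeasurableSpace E] [BorelSpace E]
    (μ : Measure E) [IsProbabilityMeasure μ]
    (α : ℝ → ℝ) (hα0 : α 0 = 0) (hαconv : ConvexOn ℝ (Set.Ici 0) α)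
    (hαnonneg : ∀ r, 0 ≤ r → 0 ≤ α r)
    (hW1H : ∀ η : Measure E, IsProbabilityMeasure η → η ≪ μ →
      Integrable (llr η μ) η →
      ∀ w : ℝ, 0 ≤ w → ENNReal.ofReal w ≤ wasserstein1 η μ →
        α w ≤ ∫ x, llr η μ x ∂η) :
    ∀ f : E → ℝ, LipschitzWith 1 f → (∃ Cf : ℝ, ∀ x, |f x| ≤ Cf) →
      ∀ lam : ℝ, 0 < lam →
        ∀ A : ℝ, (∀ r : ℝ, 0 ≤ r → r * lam - α r ≤ A) →
          ∫ x, Real.exp (lam * (f x - ∫ z, f z ∂μ)) ∂μ ≤ Real.exp A := by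
  haveI : SecondCountableTopology E := UniformSpace.secondCountable_of_separable E
  intro f hf hfb lam hlam A hA
  obtain ⟨Cf, hCf⟩ := hfb
  set c := ∫ z, f z ∂μ with hc
  set g : E → ℝ := fun x => lam * (f x - c) with hg
  have hfm : Measurable f := hf.continuous.measurable
  have hgm : Measurable g := (hfm.sub measurable_const).const_mul lam
  have hgb : ∀ x, |g x| ≤ lam * (Cf + |c|) := by
    intro x
    rw [hg, abs_mul, abs_of_pos hlam]
    refine mul_le_mul_of_nonneg_left ?_ hlam.le
    calc |f x - c| ≤ |f x| + |c| := abs_sub _ _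
      _ ≤ Cf + |c| := by linarith [hCf x]
  have hint_exp : Integrable (fun x => Real.exp (g x)) μ := by
    refine Integrable.mono' (integrable_const (Real.exp (lam * (Cf + |c|))))
      hgm.exp.aestronglyMeasurable (ae_of_all _ fun x => ?_)
    rw [Real.norm_eq_abs, abs_of_pos (Real.exp_pos _)]
    exact Real.exp_le_exp.2 ((le_abs_self _).trans (hgb x))
  set Z := ∫ x, Real.exp (g x) ∂μ with hZ
  have hZpos : 0 < Z := integral_exp_pos hint_exp
  set d : E → ℝ≥0∞ := fun x => ENNReal.ofReal (Real.exp (g x) / Z) with hd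
  have hdm : Measurable d := (hgm.exp.div_const Z).ennreal_ofReal
  set η := μ.withDensity d with hη
  have hηprob : IsProbabilityMeasure η := by
    constructor
    rw [hη, withDensity_apply _ MeasurableSet.univ, Measure.restrict_univ, hd,
      ← ofReal_integral_eq_lintegral_ofReal (hint_exp.div_const Z)
        (ae_of_all _ fun x => div_nonneg (Real.exp_pos _).le hZpos.le)]
    rw [integral_div, ← hZ, div_self hZpos.ne', ENNReal.ofReal_one]
  have hac : η ≪ μ := withDensity_absolutelyContinuous μ d
  have hllr : llr η μ =ᵐ[μ] fun x => g x - Real.log Z := by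
    filter_upwards [Measure.rnDeriv_withDensity μ hdm] with x hx
    rw [llr, hη, hx, hd, ENNReal.toReal_ofReal (div_nonneg (Real.exp_pos _).le hZpos.le),
      Real.log_div (Real.exp_ne_zero _) hZpos.ne', Real.log_exp]
  have hllrη : llr η μ =ᵐ[η] fun x => g x - Real.log Z := hac.ae_le hllr
  have hhint : Integrable (fun x => g x - Real.log Z) η := by
    refine Integrable.mono' (integrable_const (lam * (Cf + |c|) + |Real.log Z|))
      ((hgm.sub measurable_const).aestronglyMeasurable) (ae_of_all _ fun x => ?_)
    rw [Real.norm_eq_abs]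
    calc |g x - Real.log Z| ≤ |g x| + |Real.log Z| := abs_sub _ _
      _ ≤ lam * (Cf + |c|) + |Real.log Z| := by linarith [hgb x]
  have hllrint : Integrable (llr η μ) η := hhint.congr hllrη.symm
  have hfη : Integrable f η := by
    refine Integrable.mono' (integrable_const Cf) hfm.aestronglyMeasurable
      (ae_of_all _ fun x => ?_)
    rw [Real.norm_eq_abs]; exact hCf x
  set m := (∫ x, f x ∂η) - c with hm
  have hgη : Integrable g η := by
    simpa [hg] using (hfη.sub (integrable_const c)).const_mul lam
  have hgint : ∫ x, g x ∂η = lam * m := by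
    simp only [hg]
    rw [integral_const_mul, integral_sub hfη (integrable_const c), integral_const,
      probReal_univ, one_smul, hm]
  have hllr_integral : ∫ x, llr η μ x ∂η = lam * m - Real.log Z := by
    rw [integral_congr_ae hllrη, integral_sub hgη (integrable_const _), hgint,
      integral_const, probReal_univ, one_smul]
  -- Wasserstein lower bound via Kantorovich duality (easy direction)
  have hW : ENNReal.ofReal (max m 0) ≤ wasserstein1 η μ := by
    refine le_iInf fun π => le_iInf fun h1 => le_iInf fun h2 => ?_
    have hπprob : IsProbabilityMeasure π := by
      constructor
      have : π.map Prod.fst Set.univ = π Set.univ := by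
        rw [Measure.map_apply measurable_fst MeasurableSet.univ, Set.preimage_univ]
      rw [← this, h1, measure_univ]
    rcases eq_or_ne (∫⁻ p, edist p.1 p.2 ∂π) ∞ with htop | htop
    · rw [htop]; exact le_top
    · have hdint : Integrable (fun p : E × E => dist p.1 p.2) π := by
        have h := integrable_toReal_of_lintegral_ne_top measurable_edist.aemeasurable htop
        simpa [← dist_edist] using h
      have hi1 : Integrable (fun p : E × E => f p.1) π := by
        refine Integrable.mono' (integrable_const Cf)
          (hfm.comp measurable_fst).aestronglyMeasurable (ae_of_all _ fun p => ?_)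
        rw [Real.norm_eq_abs]; exact hCf p.1
      have hi2 : Integrable (fun p : E × E => f p.2) π := by
        refine Integrable.mono' (integrable_const Cf)
          (hfm.comp measurable_snd).aestronglyMeasurable (ae_of_all _ fun p => ?_)
        rw [Real.norm_eq_abs]; exact hCf p.2
      have hm_le : m ≤ ∫ p, dist p.1 p.2 ∂π := by
        have hfst : ∫ x, f x ∂η = ∫ p, f p.1 ∂π := by
          rw [← h1, integral_map measurable_fst.aemeasurable hfm.aestronglyMeasurable]
        have hsnd : c = ∫ p, f p.2 ∂π := by
          rw [hc, ← h2, integral_map measurable_snd.aemeasurable hfm.aestronglyMeasurable]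
        rw [hm, hfst, hsnd, ← integral_sub hi1 hi2]
        refine integral_mono (hi1.sub hi2) hdint fun p => ?_
        calc f p.1 - f p.2 ≤ |f p.1 - f p.2| := le_abs_self _
          _ = dist (f p.1) (f p.2) := (Real.dist_eq _ _).symm
          _ ≤ 1 * dist p.1 p.2 := hf.dist_le_mul p.1 p.2
          _ = dist p.1 p.2 := one_mul _
      calc ENNReal.ofReal (max m 0)
          ≤ ENNReal.ofReal (∫ p, dist p.1 p.2 ∂π) :=
            ENNReal.ofReal_le_ofReal
              (max_le hm_le (integral_nonneg fun p => dist_nonneg))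
        _ = ∫⁻ p, ENNReal.ofReal (dist p.1 p.2) ∂π :=
            ofReal_integral_eq_lintegral_ofReal hdint (ae_of_all _ fun p => dist_nonneg)
        _ = ∫⁻ p, edist p.1 p.2 ∂π := by simp [edist_dist]
  have hαw : α (max m 0) ≤ lam * m - Real.log Z := by
    rw [← hllr_integral]
    exact hW1H η hηprob hac hllrint (max m 0) (le_max_right _ _) hW
  have hA0 : 0 ≤ A := by have := hA 0 le_rfl; simpa [hα0] using this
  have hlogZ : Real.log Z ≤ A := by
    rcases le_or_gt 0 m with hm0 | hm0
    · have hmax : max m 0 = m := max_eq_left hm0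
      rw [hmax] at hαw
      have := hA m hm0
      linarith
    · have hmax : max m 0 = (0 : ℝ) := max_eq_right hm0.le
      rw [hmax, hα0] at hαw
      nlinarith
  calc (∫ x, Real.exp (lam * (f x - c)) ∂μ) = Z := rfl
    _ = Real.exp (Real.log Z) := (Real.exp_log hZpos).symm
    _ ≤ Real.exp A := Real.exp_le_exp.2 hlogZ
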